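/- More generally, for s ≥ 2 the iterated integral of w_s = (dt/t)^{∧(s−1)} ∧ dt/(1−t) over the simplex 0 < t_s < … < t₁ < 1 equals ζ(s): ∫_{0<t_s<…<t₁<1} (1/(t₁ t₂ ⋯ t_{s−1})) · (1/(1−t_s)) dt₁⋯dt_s = Σ_{n≥1} n^{−s}. -/

import Mathlib

open MeasureTheory

def Tset (m : ℕ) (x : ℝ) : Set (Fin m → ℝ) :=
  {t | (∀ i, 0 < t i) ∧ (∀ i j : Fin m, i < j → t j < t i) ∧ (∀ i, t i < x)}

lemma measurableSet_Tset (m : ℕ) (x : ℝ) : MeasurableSet (Tset m x) := by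
  have h1 : MeasurableSet {t : Fin m → ℝ | ∀ i, 0 < t i} := by
    rw [Set.setOf_forall]
    exact MeasurableSet.iInter fun i => measurableSet_lt measurable_const (measurable_pi_apply i)
  have h2 : MeasurableSet {t : Fin m → ℝ | ∀ i j : Fin m, i < j → t j < t i} := by
    rw [Set.setOf_forall]
    refine MeasurableSet.iInter fun i => ?_
    rw [Set.setOf_forall]
    refine MeasurableSet.iInter fun j => ?_
    rcases lt_or_ge i j with h | h
    · simp only [h, true_implies]
      exact measurableSet_lt (measurable_pi_apply j) (measurable_pi_apply i)
    · simp only [h.not_gt, false_implies, Set.setOf_true]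
      exact MeasurableSet.univ
  have h3 : MeasurableSet {t : Fin m → ℝ | ∀ i, t i < x} := by
    rw [Set.setOf_forall]
    exact MeasurableSet.iInter fun i => measurableSet_lt (measurable_pi_apply i) measurable_const
  have : Tset m x = {t : Fin m → ℝ | ∀ i, 0 < t i} ∩ ({t | ∀ i j : Fin m, i < j → t j < t i} ∩ {t | ∀ i, t i < x}) := by
    ext t; simp only [Tset, Set.mem_setOf_eq, Set.mem_inter_iff]
  rw [this]; exact h1.inter (h2.inter h3)

noncomputable def Fk (k n : ℕ) (t : Fin (k + 1) → ℝ) : ENNReal :=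
  ENNReal.ofReal ((∏ i : Fin k, (t i.castSucc)⁻¹) * t (Fin.last k) ^ n)

lemma measurable_Fk (k n : ℕ) : Measurable (Fk k n) := by
  apply Measurable.ennreal_ofReal
  exact Measurable.mul (Finset.measurable_prod Finset.univ fun i _ => (measurable_pi_apply _).inv)
    ((measurable_pi_apply _).pow_const n)

lemma cons_mem_Tset {k : ℕ} {x a : ℝ} {y : Fin (k + 1) → ℝ} (ha0 : 0 < a) (hax : a < x) :
    Fin.cons a y ∈ Tset (k + 2) x ↔ y ∈ Tset (k + 1) a := by
  constructor
  · rintro ⟨h1, h2, h3⟩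
    refine ⟨fun j => ?_, fun i j hij => ?_, fun j => ?_⟩
    · simpa using h1 j.succ
    · simpa using h2 i.succ j.succ (by simpa using hij)
    · simpa using h2 0 j.succ (Fin.succ_pos j)
  · rintro ⟨h1, h2, h3⟩
    refine ⟨fun i => ?_, fun i j hij => ?_, fun i => ?_⟩
    · rcases Fin.eq_zero_or_eq_succ i with rfl | ⟨i', rfl⟩
      · simpa using ha0
      · simpa using h1 i'
    · rcases Fin.eq_zero_or_eq_succ j with rfl | ⟨j', rfl⟩
      · exact absurd hij (Fin.not_lt_zero i).elim
      · rcases Fin.eq_zero_or_eq_succ i with rfl | ⟨i', rfl⟩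
        · simpa using h3 j'
        · simpa using h2 i' j' (by simpa using hij)
    · rcases Fin.eq_zero_or_eq_succ i with rfl | ⟨i', rfl⟩
      · simpa using hax
      · simpa using (h3 i').trans hax

lemma cons_not_mem_Tset {k : ℕ} {x a : ℝ} {y : Fin (k + 1) → ℝ} (ha : a ∉ Set.Ioo 0 x) :
    Fin.cons a y ∉ Tset (k + 2) x := by
  rintro ⟨h1, _, h3⟩
  exact ha ⟨by simpa using h1 0, by simpa using h3 0⟩

lemma lint_pow (n : ℕ) {x : ℝ} (hx : 0 ≤ x) (C : ℝ) (hC : 0 ≤ C) :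
    ∫⁻ a in Set.Ioo 0 x, ENNReal.ofReal (a ^ n * C) =
      ENNReal.ofReal (x ^ (n + 1) / (n + 1) * C) := by
  have hint : IntegrableOn (fun a : ℝ => a ^ n * C) (Set.Ioo 0 x) := by
    apply Integrable.mul_const
    exact ((intervalIntegral.intervalIntegrable_pow n).1).mono_set Set.Ioo_subset_Ioc_self
  rw [← ofReal_integral_eq_lintegral_ofReal hint]
  · congr 1
    rw [integral_mul_const C _, ← MeasureTheory.integral_Ioc_eq_integral_Ioo,
      ← intervalIntegral.integral_of_le hx, integral_pow]
    ring
  · filter_upwards [ae_restrict_mem measurableSet_Ioo] with a ha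
    exact mul_nonneg (pow_nonneg ha.1.le n) hC

lemma key (k : ℕ) : ∀ (n : ℕ) (x : ℝ), 0 ≤ x →
    ∫⁻ t in Tset (k + 1) x, Fk k n t =
      ENNReal.ofReal (x ^ (n + 1) / ((n : ℝ) + 1) ^ (k + 1)) := by
  induction k with
  | zero =>
    intro n x hx
    have hT := measurableSet_Tset 1 x
    have hF := measurable_Fk 0 n
    erw [← lintegral_indicator hT,
      ← ((volume_preserving_funUnique (Fin 1) ℝ).symm _).lintegral_comp (hF.indicator hT)]
    have hpt : ∀ a : ℝ, (Tset 1 x).indicator (Fk 0 n)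
        ((MeasurableEquiv.funUnique (Fin 1) ℝ).symm a)
        = (Set.Ioo 0 x).indicator (fun a => ENNReal.ofReal (a ^ n * 1)) a := by
      intro a
      have hmem : ((MeasurableEquiv.funUnique (Fin 1) ℝ).symm a) = fun _ : Fin 1 => a := rfl
      rw [hmem]
      by_cases ha : a ∈ Set.Ioo 0 x
      · rw [Set.indicator_of_mem ha, Set.indicator_of_mem]
        · simp [Fk, mul_comm]
        · exact ⟨fun _ => ha.1, fun i j hij => absurd hij (by simp [Subsingleton.elim i j]),
            fun _ => ha.2⟩
      · rw [Set.indicator_of_notMem ha, Set.indicator_of_notMem]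
        rintro ⟨h1, _, h3⟩
        exact ha ⟨h1 0, h3 0⟩
    rw [lintegral_congr hpt, lintegral_indicator measurableSet_Ioo,
      lint_pow n hx 1 zero_le_one]
    norm_num
  | succ k IH =>
    intro n x hx
    have hT := measurableSet_Tset (k + 2) x
    have hF := measurable_Fk (k + 1) n
    set e := MeasurableEquiv.piFinSuccAbove (fun _ : Fin (k + 2) => ℝ) 0 with he
    have hsymm : ∀ (a : ℝ) (y : Fin (k + 1) → ℝ), e.symm (a, y) = Fin.cons a y := by
      intro a y
      rw [he, MeasurableEquiv.piFinSuccAbove_symm_apply]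
      exact Fin.insertNth_zero' a y
    rw [← lintegral_indicator hT,
      ← ((volume_preserving_piFinSuccAbove (fun _ : Fin (k + 2) => ℝ) 0).symm _).lintegral_comp
        (hF.indicator hT)]
    have hprod := MeasureTheory.lintegral_prod (μ := (volume : Measure ℝ)) (ν := (volume : Measure (Fin (k + 1) → ℝ)))
      (fun z : ℝ × (Fin (k + 1) → ℝ) => (Tset (k + 2) x).indicator (Fk (k + 1) n) (e.symm z))
      (((hF.indicator hT).comp e.symm.measurable).aemeasurable)
    rw [← he, Measure.volume_eq_prod, hprod]
    have hinner : ∀ a : ℝ, (∫⁻ y : Fin (k + 1) → ℝ,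
        (Tset (k + 2) x).indicator (Fk (k + 1) n) (e.symm (a, y)))
        = (Set.Ioo 0 x).indicator
            (fun a => ENNReal.ofReal (a ^ n * (((n : ℝ) + 1) ^ (k + 1))⁻¹)) a := by
      intro a
      by_cases ha : a ∈ Set.Ioo 0 x
      · rw [Set.indicator_of_mem ha]
        have hconsF : ∀ y : Fin (k + 1) → ℝ,
            Fk (k + 1) n (Fin.cons a y) = ENNReal.ofReal a⁻¹ * Fk k n y := by
          intro y
          have hprod : (∏ i : Fin (k + 1), ((Fin.cons a y : Fin (k + 2) → ℝ) i.castSucc)⁻¹)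
              = a⁻¹ * ∏ i : Fin k, (y i.castSucc)⁻¹ := by
            rw [Fin.prod_univ_succ]
            simp only [← Fin.succ_castSucc, Fin.cons_succ, Fin.castSucc_zero, Fin.cons_zero]
          rw [Fk, Fk, hprod]
          have hlast : (Fin.cons a y : Fin (k + 2) → ℝ) (Fin.last (k + 1)) = y (Fin.last k) := by
            rw [← Fin.succ_last, Fin.cons_succ]
          rw [hlast, mul_assoc, ENNReal.ofReal_mul (inv_nonneg.2 ha.1.le)]
        have hptw : ∀ y : Fin (k + 1) → ℝ,
            (Tset (k + 2) x).indicator (Fk (k + 1) n) (e.symm (a, y))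
            = (Tset (k + 1) a).indicator (fun y => ENNReal.ofReal a⁻¹ * Fk k n y) y := by
          intro y
          rw [hsymm]
          by_cases hy : y ∈ Tset (k + 1) a
          · rw [Set.indicator_of_mem hy, Set.indicator_of_mem
              ((cons_mem_Tset ha.1 ha.2).2 hy), hconsF]
          · rw [Set.indicator_of_notMem hy, Set.indicator_of_notMem
              (fun h => hy ((cons_mem_Tset ha.1 ha.2).1 h))]
        rw [lintegral_congr hptw, lintegral_indicator (measurableSet_Tset _ _),
          lintegral_const_mul _ (measurable_Fk k n), IH n a ha.1.le,
          ← ENNReal.ofReal_mul (inv_nonneg.2 ha.1.le)]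
        congr 1
        have hane : a ≠ 0 := ne_of_gt ha.1
        have hcne : ((n : ℝ) + 1) ^ (k + 1) ≠ 0 := by positivity
        field_simp
        rw [pow_succ]
        ring
      · rw [Set.indicator_of_notMem ha]
        have : ∀ y : Fin (k + 1) → ℝ,
            (Tset (k + 2) x).indicator (Fk (k + 1) n) (e.symm (a, y)) = 0 := by
          intro y
          rw [hsymm]
          exact Set.indicator_of_notMem (cons_not_mem_Tset ha) _
        simp [this]
    rw [lintegral_congr hinner, lintegral_indicator measurableSet_Ioo,
      lint_pow n hx _ (inv_nonneg.2 (by positivity))]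
    congr 1
    rw [pow_succ ((n : ℝ) + 1) (k + 1), ← div_div, div_right_comm, div_eq_mul_inv (x ^ (n + 1) / ((n : ℝ) + 1))]

set_option maxHeartbeats 1000000 in
/-- Euler/Kontsevich iterated integral representation of `ζ(s)` for `s ≥ 2`:
the integral of `(1/(t₁ t₂ ⋯ t_{s−1})) · (1/(1−t_s))` over the open simplex
`{0 < t_s < ⋯ < t₁ < 1} ⊂ ℝ^s` equals `Σ_{n≥1} n^{−s}`.  Here `t : Fin s → ℝ`
lists the coordinates in decreasing order, so `t_s` is the last one. -/
theorem zeta_iterated_integral (s : ℕ) (hs : 2 ≤ s) :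
    (∫ t in {t : Fin s → ℝ |
        (∀ i, 0 < t i ∧ t i < 1) ∧ ∀ i j : Fin s, i < j → t j < t i},
        (∏ i ∈ Finset.univ.erase (Fin.last (s - 1)), (t (Fin.cast (by omega) i))⁻¹) *
          (1 - t (Fin.cast (by omega) (Fin.last (s - 1))))⁻¹)
      = ∑' n : ℕ, (((n : ℝ) + 1) ^ s)⁻¹ := by
  obtain ⟨k, rfl⟩ : ∃ k, s = k + 2 := ⟨s - 2, by omega⟩
  have hSeq : {t : Fin (k + 2) → ℝ |
      (∀ i, 0 < t i ∧ t i < 1) ∧ ∀ i j : Fin (k + 2), i < j → t j < t i} = Tset (k + 2) 1 := by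
    ext t
    simp only [Set.mem_setOf_eq, Tset]
    constructor
    · rintro ⟨h1, h2⟩; exact ⟨fun i => (h1 i).1, h2, fun i => (h1 i).2⟩
    · rintro ⟨h1, h2, h3⟩; exact ⟨fun i => ⟨h1 i, h3 i⟩, h2⟩
  have hgoal : (∫ t in Tset (k + 2) 1,
      (∏ i ∈ Finset.univ.erase (Fin.last (k + 1)), (t i)⁻¹) * (1 - t (Fin.last (k + 1)))⁻¹)
      = ∑' n : ℕ, (((n : ℝ) + 1) ^ (k + 2))⁻¹ := by
    have hS : MeasurableSet (Tset (k + 2) 1) := measurableSet_Tset _ _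
    have hmeas : Measurable (fun t : Fin (k + 2) → ℝ =>
        (∏ i ∈ Finset.univ.erase (Fin.last (k + 1)), (t i)⁻¹) * (1 - t (Fin.last (k + 1)))⁻¹) :=
      (Finset.measurable_prod _ fun i _ => (measurable_pi_apply i).inv).mul
        ((measurable_const.sub (measurable_pi_apply _)).inv)
    rw [MeasureTheory.integral_eq_lintegral_of_nonneg_ae
      ((ae_restrict_iff' hS).2 (ae_of_all _ fun t ht => mul_nonneg
        (Finset.prod_nonneg fun i _ => inv_nonneg.2 (ht.1 i).le)
        (inv_nonneg.2 (by have := ht.2.2 (Fin.last (k + 1)); linarith))))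
      hmeas.aestronglyMeasurable]
    have hpt : ∀ t ∈ Tset (k + 2) 1, ENNReal.ofReal
        ((∏ i ∈ Finset.univ.erase (Fin.last (k + 1)), (t i)⁻¹) * (1 - t (Fin.last (k + 1)))⁻¹)
        = ∑' n : ℕ, Fk (k + 1) n t := by
      intro t ht
      have h0 : 0 < t (Fin.last (k + 1)) := ht.1 _
      have h1 : t (Fin.last (k + 1)) < 1 := ht.2.2 _
      have hprod : ∏ i ∈ Finset.univ.erase (Fin.last (k + 1)), (t i)⁻¹
          = ∏ i : Fin (k + 1), (t i.castSucc)⁻¹ := by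
        have hc := Finset.prod_erase_mul Finset.univ (fun i => (t i)⁻¹)
          (Finset.mem_univ (Fin.last (k + 1)))
        rw [Fin.prod_univ_castSucc] at hc
        exact mul_right_cancel₀ (inv_ne_zero h0.ne') hc
      rw [hprod, ← tsum_geometric_of_lt_one h0.le h1, ← tsum_mul_left]
      have hof : ENNReal.ofReal (∑' n : ℕ,
            (∏ i : Fin (k + 1), (t i.castSucc)⁻¹) * t (Fin.last (k + 1)) ^ n)
          = ∑' n : ℕ, ENNReal.ofReal
            ((∏ i : Fin (k + 1), (t i.castSucc)⁻¹) * t (Fin.last (k + 1)) ^ n) :=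
        ENNReal.ofReal_tsum_of_nonneg
          (fun n => mul_nonneg
            (Finset.prod_nonneg fun i _ => inv_nonneg.2 (ht.1 i.castSucc).le)
            (pow_nonneg h0.le n))
          ((summable_geometric_of_lt_one h0.le h1).mul_left _)
      rw [hof]
      exact tsum_congr fun n => rfl
    rw [setLIntegral_congr_fun hS hpt,
      lintegral_tsum fun n => (measurable_Fk (k + 1) n).aemeasurable]
    have hterm : ∀ n : ℕ, ∫⁻ t in Tset (k + 2) 1, Fk (k + 1) n t
        = ENNReal.ofReal ((((n : ℝ) + 1) ^ (k + 2))⁻¹) := by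
      intro n
      rw [key (k + 1) n 1 zero_le_one, one_pow, one_div]
    rw [tsum_congr hterm, ENNReal.tsum_toReal_eq fun n => ENNReal.ofReal_ne_top]
    exact tsum_congr fun n => ENNReal.toReal_ofReal (by positivity)
  rw [hSeq]
  exact hgoal
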